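/- For every δ ∈ (0,1] with 1/δ ∈ ℤ and every μ ∈ Δ_M, the set S_δ(μ) is nonempty and μ lies in the convex hull of S_δ(μ); that is, every point of the simplex is a convex combination of δ-grid points of the simplex lying at ℓ∞-distance at most δ from it. -/

import Mathlib

open Finset in
lemma card_ne_one (M : ℕ) (r : ℤ) (f : Fin M → ℝ)
    (h0 : ∀ θ, 0 ≤ f θ) (h1 : ∀ θ, f θ ≤ 1) (hsum : ∑ θ, f θ = (r : ℝ)) :
    (Finset.univ.filter fun θ => f θ ≠ 0 ∧ f θ ≠ 1).card ≠ 1 := by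
  intro hc
  set T := Finset.univ.filter fun θ => f θ ≠ 0 ∧ f θ ≠ 1 with hT
  obtain ⟨θ0, hθ0⟩ := Finset.card_eq_one.mp hc
  have hmem : θ0 ∈ T := by rw [hθ0]; exact Finset.mem_singleton_self _
  have hθ0f : f θ0 ≠ 0 ∧ f θ0 ≠ 1 := (Finset.mem_filter.mp hmem).2
  have hrest : ∀ θ ∈ Tᶜ, f θ = 0 ∨ f θ = 1 := by
    intro θ hθ
    have := Finset.mem_compl.mp hθ
    by_contra hcon
    push_neg at hcon
    exact this (Finset.mem_filter.mpr ⟨Finset.mem_univ _, hcon⟩)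
  -- sum over complement is a natural number
  set m := (Tᶜ.filter fun θ => f θ = 1).card with hm
  have hsum' : ∑ θ ∈ Tᶜ, f θ = (m : ℝ) := by
    rw [← Finset.sum_filter_add_sum_filter_not Tᶜ (fun θ => f θ = 1)]
    have e1 : ∑ θ ∈ Tᶜ.filter (fun θ => f θ = 1), f θ = (m : ℝ) := by
      rw [Finset.sum_congr rfl (fun θ hθ => (Finset.mem_filter.mp hθ).2)]
      simp [hm]
    have e2 : ∑ θ ∈ Tᶜ.filter (fun θ => ¬ f θ = 1), f θ = 0 := by
      apply Finset.sum_eq_zero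
      intro θ hθ
      rcases hrest θ (Finset.mem_filter.mp hθ).1 with h | h
      · exact h
      · exact absurd h (Finset.mem_filter.mp hθ).2
    rw [e1, e2, add_zero]
  have htot : ∑ θ, f θ = ∑ θ ∈ Tᶜ, f θ + ∑ θ ∈ T, f θ := by
    rw [Finset.sum_compl_add_sum]
  rw [hθ0] at htot hsum'
  simp only [Finset.sum_singleton] at htot
  rw [hsum, hsum'] at htot
  have hfθ0 : f θ0 = (r : ℝ) - m := by linarith
  have hlt : (0:ℝ) < (r:ℝ) - m := by
    have := lt_of_le_of_ne (h0 θ0) (Ne.symm hθ0f.1)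
    linarith
  have hlt1 : (r:ℝ) - m < 1 := by
    have := lt_of_le_of_ne (h1 θ0) hθ0f.2
    linarith
  have h1' : (0:ℝ) < ((r - m : ℤ) : ℝ) := by push_cast; linarith
  have h2' : ((r - m : ℤ) : ℝ) < 1 := by push_cast; linarith
  have : (0:ℤ) < r - m := by exact_mod_cast h1'
  have : (r - m : ℤ) < 1 := by exact_mod_cast h2'
  omega

open Finset in
lemma hyper (M : ℕ) (r : ℤ) :
    ∀ n (f : Fin M → ℝ), (Finset.univ.filter fun θ => f θ ≠ 0 ∧ f θ ≠ 1).card ≤ n →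
      (∀ θ, 0 ≤ f θ) → (∀ θ, f θ ≤ 1) → ∑ θ, f θ = (r : ℝ) →
      f ∈ convexHull ℝ {v : Fin M → ℝ | (∀ θ, v θ = 0 ∨ v θ = 1) ∧ ∑ θ, v θ = (r : ℝ)} := by
  intro n
  induction n with
  | zero =>
    intro f hcard h0 h1 hsum
    apply subset_convexHull
    refine ⟨fun θ => ?_, hsum⟩
    by_contra hcon
    push_neg at hcon
    have : θ ∈ Finset.univ.filter fun θ => f θ ≠ 0 ∧ f θ ≠ 1 :=
      Finset.mem_filter.mpr ⟨Finset.mem_univ _, hcon⟩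
    have := Finset.card_pos.mpr ⟨θ, this⟩
    omega
  | succ n ih =>
    intro f hcard h0 h1 hsum
    by_cases hc : (Finset.univ.filter fun θ => f θ ≠ 0 ∧ f θ ≠ 1).card ≤ n
    · exact ih f hc h0 h1 hsum
    push_neg at hc
    set T := Finset.univ.filter fun θ => f θ ≠ 0 ∧ f θ ≠ 1 with hT
    have hcard2 : 1 < T.card := by
      have h2 := card_ne_one M r f h0 h1 hsum
      rw [← hT] at h2
      omega
    obtain ⟨i, hi, j, hj, hij⟩ := Finset.one_lt_card.mp hcard2
    have hif : f i ≠ 0 ∧ f i ≠ 1 := (Finset.mem_filter.mp hi).2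
    have hjf : f j ≠ 0 ∧ f j ≠ 1 := (Finset.mem_filter.mp hj).2
    have hi0 : 0 < f i := lt_of_le_of_ne (h0 i) (Ne.symm hif.1)
    have hi1 : f i < 1 := lt_of_le_of_ne (h1 i) hif.2
    have hj0 : 0 < f j := lt_of_le_of_ne (h0 j) (Ne.symm hjf.1)
    have hj1 : f j < 1 := lt_of_le_of_ne (h1 j) hjf.2
    set a := min (1 - f i) (f j) with ha
    set b := min (f i) (1 - f j) with hb
    have ha0 : 0 < a := lt_min (by linarith) hj0
    have hb0 : 0 < b := lt_min hi0 (by linarith)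
    have hai : a ≤ 1 - f i := min_le_left _ _
    have haj : a ≤ f j := min_le_right _ _
    have hbi : b ≤ f i := min_le_left _ _
    have hbj : b ≤ 1 - f j := min_le_right _ _
    set d : Fin M → ℝ := fun θ => if θ = i then 1 else if θ = j then -1 else 0 with hd
    have hdi : d i = 1 := by simp [hd]
    have hdj : d j = -1 := by simp [hd, hij.symm]
    have hdo : ∀ θ, θ ≠ i → θ ≠ j → d θ = 0 := by intro θ h1' h2'; simp [hd, h1', h2']
    have hdsum : ∑ θ, d θ = 0 := by
      have heq : ∀ θ, d θ = (if θ = i then (1:ℝ) else 0) + (if θ = j then (-1:ℝ) else 0) := by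
        intro θ
        by_cases h1' : θ = i
        · rw [h1', hdi]
          simp [hij]
        · by_cases h2' : θ = j
          · rw [h2', hdj, if_neg (Ne.symm hij)]
            simp
          · rw [hdo θ h1' h2']
            simp [h1', h2']
      rw [Finset.sum_congr rfl (fun θ _ => heq θ), Finset.sum_add_distrib,
        Finset.sum_ite_eq' Finset.univ i, Finset.sum_ite_eq' Finset.univ j]
      simp
    set g : Fin M → ℝ := fun θ => f θ + a * d θ with hg
    set h : Fin M → ℝ := fun θ => f θ - b * d θ with hh
    have hg0 : ∀ θ, 0 ≤ g θ := by
      intro θ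
      by_cases h1' : θ = i
      · rw [h1']; simp only [hg, hdi]; linarith
      by_cases h2' : θ = j
      · rw [h2']; simp only [hg, hdj]; linarith
      · simp [hg, hdo θ h1' h2', h0 θ]
    have hg1 : ∀ θ, g θ ≤ 1 := by
      intro θ
      by_cases h1' : θ = i
      · rw [h1']; simp only [hg, hdi]; linarith
      by_cases h2' : θ = j
      · rw [h2']; simp only [hg, hdj]; linarith
      · simp [hg, hdo θ h1' h2', h1 θ]
    have hh0 : ∀ θ, 0 ≤ h θ := by
      intro θ
      by_cases h1' : θ = i
      · rw [h1']; simp only [hh, hdi]; linarith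
      by_cases h2' : θ = j
      · rw [h2']; simp only [hh, hdj]; linarith
      · simp [hh, hdo θ h1' h2', h0 θ]
    have hh1 : ∀ θ, h θ ≤ 1 := by
      intro θ
      by_cases h1' : θ = i
      · rw [h1']; simp only [hh, hdi]; linarith
      by_cases h2' : θ = j
      · rw [h2']; simp only [hh, hdj]; linarith
      · simp [hh, hdo θ h1' h2', h1 θ]
    have hgsum : ∑ θ, g θ = (r : ℝ) := by
      simp only [hg, Finset.sum_add_distrib, ← Finset.mul_sum, hdsum, hsum, mul_zero, add_zero]
    have hhsum : ∑ θ, h θ = (r : ℝ) := by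
      simp only [hh, Finset.sum_sub_distrib, ← Finset.mul_sum, hdsum, hsum, mul_zero, sub_zero]
    have hsubg : (Finset.univ.filter fun θ => g θ ≠ 0 ∧ g θ ≠ 1) ⊆ T := by
      intro θ hθ
      by_cases h1' : θ = i
      · rw [h1']; exact hi
      by_cases h2' : θ = j
      · rw [h2']; exact hj
      · have hmem := (Finset.mem_filter.mp hθ).2
        rw [hT]
        refine Finset.mem_filter.mpr ⟨Finset.mem_univ _, ?_⟩
        simpa [hg, hdo θ h1' h2'] using hmem
    have hsubh : (Finset.univ.filter fun θ => h θ ≠ 0 ∧ h θ ≠ 1) ⊆ T := by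
      intro θ hθ
      by_cases h1' : θ = i
      · rw [h1']; exact hi
      by_cases h2' : θ = j
      · rw [h2']; exact hj
      · have hmem := (Finset.mem_filter.mp hθ).2
        rw [hT]
        refine Finset.mem_filter.mpr ⟨Finset.mem_univ _, ?_⟩
        simpa [hh, hdo θ h1' h2'] using hmem
    have hgcard : (Finset.univ.filter fun θ => g θ ≠ 0 ∧ g θ ≠ 1).card ≤ n := by
      have hmiss : ∃ ω ∈ T, ω ∉ (Finset.univ.filter fun θ => g θ ≠ 0 ∧ g θ ≠ 1) := by
        rcases min_cases (1 - f i) (f j) with ⟨hmin, _⟩ | ⟨hmin, _⟩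
        · refine ⟨i, hi, ?_⟩
          have hgi : g i = 1 := by simp only [hg, hdi]; rw [ha, hmin]; ring
          simp [hgi]
        · refine ⟨j, hj, ?_⟩
          have hgj : g j = 0 := by simp only [hg, hdj]; rw [ha, hmin]; ring
          simp [hgj]
      obtain ⟨ω, hω1, hω2⟩ := hmiss
      have := Finset.card_lt_card (Finset.ssubset_iff_of_subset hsubg |>.mpr ⟨ω, hω1, hω2⟩)
      omega
    have hhcard : (Finset.univ.filter fun θ => h θ ≠ 0 ∧ h θ ≠ 1).card ≤ n := by
      have hmiss : ∃ ω ∈ T, ω ∉ (Finset.univ.filter fun θ => h θ ≠ 0 ∧ h θ ≠ 1) := by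
        rcases min_cases (f i) (1 - f j) with ⟨hmin, _⟩ | ⟨hmin, _⟩
        · refine ⟨i, hi, ?_⟩
          have hhi : h i = 0 := by simp only [hh, hdi]; rw [hb, hmin]; ring
          simp [hhi]
        · refine ⟨j, hj, ?_⟩
          have hhj : h j = 1 := by simp only [hh, hdj]; rw [hb, hmin]; ring
          simp [hhj]
      obtain ⟨ω, hω1, hω2⟩ := hmiss
      have := Finset.card_lt_card (Finset.ssubset_iff_of_subset hsubh |>.mpr ⟨ω, hω1, hω2⟩)
      omega
    have hgmem := ih g hgcard hg0 hg1 hgsum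
    have hhmem := ih h hhcard hh0 hh1 hhsum
    have hab : (0:ℝ) < a + b := by linarith
    have hmem := (convex_convexHull ℝ
        {v : Fin M → ℝ | (∀ θ, v θ = 0 ∨ v θ = 1) ∧ ∑ θ, v θ = (r : ℝ)})
      hgmem hhmem (le_of_lt (div_pos hb0 hab)) (le_of_lt (div_pos ha0 hab))
      (by rw [← add_div, show b + a = a + b from add_comm b a,
        div_self (ne_of_gt hab)])
    have hcomb : (b/(a+b)) • g + (a/(a+b)) • h = f := by
      funext θ
      have hab' : a + b ≠ 0 := ne_of_gt hab
      simp only [Pi.add_apply, Pi.smul_apply, smul_eq_mul, hg, hh]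
      field_simp
      ring
    rwa [hcomb] at hmem

/-- For `δ ∈ (0,1]` with `1/δ ∈ ℤ` and `μ ∈ Δ_M`, the set
`S_δ(μ) = {μ' ∈ Δ_M : all coordinates of μ' are integer multiples of δ and
‖μ - μ'‖_∞ ≤ δ}` is nonempty, and `μ` lies in its convex hull. -/
theorem mem_convexHull_grid (M : ℕ) (hM : 0 < M)
    (δ : ℝ) (hδ0 : 0 < δ) (hδ1 : δ ≤ 1)
    (hint : ∃ N : ℕ, 0 < N ∧ δ = 1 / N)
    (μ : Fin M → ℝ) (hμ : μ ∈ stdSimplex ℝ (Fin M)) :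
    ({μ' | μ' ∈ stdSimplex ℝ (Fin M) ∧ (∀ θ, ∃ z : ℤ, μ' θ = z * δ) ∧
        ∀ θ, |μ θ - μ' θ| ≤ δ} : Set (Fin M → ℝ)).Nonempty ∧
    μ ∈ convexHull ℝ
      ({μ' | μ' ∈ stdSimplex ℝ (Fin M) ∧ (∀ θ, ∃ z : ℤ, μ' θ = z * δ) ∧
        ∀ θ, |μ θ - μ' θ| ≤ δ} : Set (Fin M → ℝ)) := by
  obtain ⟨N, hN0, hδN⟩ := hint
  have hNR : (0:ℝ) < N := by exact_mod_cast hN0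
  have hμ0 : ∀ θ, 0 ≤ μ θ := hμ.1
  have hμsum : ∑ θ, μ θ = 1 := hμ.2
  set k : Fin M → ℤ := fun θ => ⌊μ θ / δ⌋ with hk
  set f : Fin M → ℝ := fun θ => Int.fract (μ θ / δ) with hf
  have hf0 : ∀ θ, 0 ≤ f θ := fun θ => Int.fract_nonneg _
  have hf1' : ∀ θ, f θ < 1 := fun θ => Int.fract_lt_one _
  have hf1 : ∀ θ, f θ ≤ 1 := fun θ => (hf1' θ).le
  have hk0 : ∀ θ, (0:ℝ) ≤ (k θ : ℝ) := by
    intro θ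
    have : (0:ℤ) ≤ k θ := Int.floor_nonneg.mpr (div_nonneg (hμ0 θ) hδ0.le)
    exact_mod_cast this
  have hkf : ∀ θ, μ θ = δ * ((k θ : ℝ) + f θ) := by
    intro θ
    have h := Int.floor_add_fract (μ θ / δ)
    have : (k θ : ℝ) + f θ = μ θ / δ := h
    rw [this]
    field_simp
  set r : ℤ := (N : ℤ) - ∑ θ, k θ with hr
  have hsumf : ∑ θ, f θ = (r : ℝ) := by
    have h1 : ∑ θ, ((k θ : ℝ) + f θ) = (N : ℝ) := by
      have h2 : ∑ θ, μ θ = ∑ θ, δ * ((k θ : ℝ) + f θ) :=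
        Finset.sum_congr rfl (fun θ _ => hkf θ)
      rw [hμsum, ← Finset.mul_sum] at h2
      have hδ' : δ ≠ 0 := ne_of_gt hδ0
      rw [hδN] at h2
      field_simp at h2
      linarith [h2]
    rw [Finset.sum_add_distrib] at h1
    push_cast [hr]
    push_cast at h1
    linarith
  have hhyper := hyper M r _ f le_rfl hf0 hf1 hsumf
  set A : Set (Fin M → ℝ) :=
    {v : Fin M → ℝ | (∀ θ, v θ = 0 ∨ v θ = 1) ∧ ∑ θ, v θ = (r : ℝ)} with hA
  set S : Set (Fin M → ℝ) :=
    {μ' | μ' ∈ stdSimplex ℝ (Fin M) ∧ (∀ θ, ∃ z : ℤ, μ' θ = z * δ) ∧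
      ∀ θ, |μ θ - μ' θ| ≤ δ} with hS
  set L : (Fin M → ℝ) →ᵃ[ℝ] (Fin M → ℝ) :=
    { toFun := fun v θ => δ * ((k θ : ℝ) + v θ)
      linear := δ • (LinearMap.id)
      map_vadd' := by
        intro p v
        funext θ
        simp only [LinearMap.smul_apply, LinearMap.id_apply]
        show δ * ((k θ : ℝ) + (v θ + p θ)) = δ * v θ + δ * ((k θ : ℝ) + p θ)
        ring } with hL
  have hμL : μ = L f := by
    funext θ
    exact hkf θ
  have himg : L '' A ⊆ S := by
    rintro _ ⟨v, ⟨hv01, hvsum⟩, rfl⟩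
    have hLv : ∀ θ, L v θ = δ * ((k θ : ℝ) + v θ) := fun θ => rfl
    refine ⟨⟨?_, ?_⟩, ?_, ?_⟩
    · intro θ
      rw [hLv θ]
      rcases hv01 θ with h | h <;> rw [h] <;> nlinarith [hk0 θ]
    · have : ∑ θ, L v θ = δ * ((∑ θ, (k θ : ℝ)) + (r : ℝ)) := by
        rw [Finset.sum_congr rfl (fun θ _ => hLv θ), ← Finset.mul_sum,
          Finset.sum_add_distrib, hvsum]
      rw [this]
      have hsk : (∑ θ, (k θ : ℝ)) + (r : ℝ) = (N : ℝ) := by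
        push_cast [hr]
        ring
      rw [hsk, hδN]
      field_simp
    · intro θ
      rcases hv01 θ with h | h
      · exact ⟨k θ, by rw [hLv θ, h]; ring⟩
      · exact ⟨k θ + 1, by rw [hLv θ, h]; push_cast; ring⟩
    · intro θ
      rw [hLv θ, hkf θ]
      have : δ * ((k θ : ℝ) + f θ) - δ * ((k θ : ℝ) + v θ) = δ * (f θ - v θ) := by ring
      rw [this, abs_mul, abs_of_pos hδ0]
      have : |f θ - v θ| ≤ 1 := by
        rcases hv01 θ with h | h <;> rw [h] <;> rw [abs_le] <;>
          constructor <;> [skip; skip; skip; skip] <;> linarith [hf0 θ, hf1 θ]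
      nlinarith
  have hhull : μ ∈ convexHull ℝ S := by
    have h1 : L f ∈ L '' (convexHull ℝ A) := Set.mem_image_of_mem _ hhyper
    rw [AffineMap.image_convexHull] at h1
    rw [hμL]
    exact convexHull_mono himg h1
  exact ⟨convexHull_nonempty_iff.mp ⟨μ, hhull⟩, hhull⟩
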